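/- Let η be the Minkowski bilinear form on ℝ⁴, η(x,y) = x₀y₀ − x₁y₁ − x₂y₂ − x₃y₃, and let e = (0,1,0,0). Then the tube T_e = {x ∈ ℝ⁴ : η(e,x)² = η(e,e)·η(x,x)} is exactly the image of the three-parameter map (τ, a, ψ) ↦ τ·e + (a, 0, a·cos ψ, a·sin ψ) = (a, τ, a·cos ψ, a·sin ψ), with τ, a, ψ ranging over ℝ. Hence the spacelike 'straight line' in Minkowski space is a three-dimensional surface containing the one-dimensional line {τ·e : τ ∈ ℝ}. -/

import Mathlib

/-- In Minkowski space, the tube in the direction of the spacelike vector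
`e = (0,1,0,0)` is exactly the image of the three-parameter map
`(τ, a, ψ) ↦ (a, τ, a cos ψ, a sin ψ)`; in particular it contains the
one-dimensional line `{τ • e : τ ∈ ℝ}`. -/
theorem minkowski_spacelike_tube_parametrization
    (η : (Fin 4 → ℝ) → (Fin 4 → ℝ) → ℝ)
    (hη : ∀ x y : Fin 4 → ℝ,
      η x y = x 0 * y 0 - x 1 * y 1 - x 2 * y 2 - x 3 * y 3)
    (e : Fin 4 → ℝ) (he : e = ![0, 1, 0, 0]) :
    {x : Fin 4 → ℝ | (η e x) ^ 2 = η e e * η x x} =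
      Set.range (fun p : ℝ × ℝ × ℝ =>
        (fun τ a ψ => ![a, τ, a * Real.cos ψ, a * Real.sin ψ])
          p.1 p.2.1 p.2.2) ∧
    Set.range (fun τ : ℝ => τ • e) ⊆
      {x : Fin 4 → ℝ | (η e x) ^ 2 = η e e * η x x} := by
  subst he
  constructor
  · ext x
    simp only [Set.mem_setOf_eq, Set.mem_range, hη, Matrix.cons_val_zero,
      Matrix.cons_val_one, Matrix.head_cons, Matrix.cons_val_two,
      Matrix.tail_cons, Matrix.cons_val_three]
    constructor
    · intro h
      have key : x 0 ^ 2 = x 2 ^ 2 + x 3 ^ 2 := by nlinarith [h]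
      by_cases h0 : x 0 = 0
      · have h2 : x 2 = 0 := by nlinarith [sq_nonneg (x 2), sq_nonneg (x 3)]
        have h3 : x 3 = 0 := by nlinarith [sq_nonneg (x 2), sq_nonneg (x 3)]
        refine ⟨(x 1, 0, 0), ?_⟩
        funext i
        fin_cases i <;> simp [h0, h2, h3]
      · set w : ℂ := ⟨x 2 / x 0, x 3 / x 0⟩ with hw
        have habs : ‖w‖ = 1 := by
          rw [Complex.norm_def, Complex.normSq_mk]
          have : x 2 / x 0 * (x 2 / x 0) + x 3 / x 0 * (x 3 / x 0) = 1 := by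
            field_simp
            nlinarith [key]
          rw [this, Real.sqrt_one]
        have hwne : w ≠ 0 := by
          intro hz; rw [hz] at habs; simp at habs
        have hc : Real.cos (Complex.arg w) = x 2 / x 0 := by
          rw [Complex.cos_arg hwne, habs]; simp [hw]
        have hs : Real.sin (Complex.arg w) = x 3 / x 0 := by
          rw [Complex.sin_arg, habs]; simp [hw]
        refine ⟨(x 1, x 0, Complex.arg w), ?_⟩
        funext i
        fin_cases i <;> simp [hc, hs]
        · field_simp
        · field_simp
    · rintro ⟨⟨τ, a, ψ⟩, rfl⟩
      simp only [Matrix.cons_val_zero, Matrix.cons_val_one, Matrix.head_cons,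
        Matrix.cons_val_two, Matrix.tail_cons, Matrix.cons_val_three]
      nlinarith [Real.sin_sq_add_cos_sq ψ]
  · rintro x ⟨τ, rfl⟩
    simp only [Set.mem_setOf_eq, hη]
    simp [Matrix.smul_cons]
    ring
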